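/- In the finite quadratic module D = (ℤ/Nℤ)² ⊕ (ℤ/N'ℤ)² with q(w,x,y,z) = wx/N + yz/N' ∈ ℚ/ℤ (N' | N), for coprime integers a, c with c ≥ 0 and M = gcd(N/N', c), the subgroup H generated by (Na/(N'M), 0, 0, -c/M) and (0, c, a, 0) is a self-dual isotropic subgroup of D. -/

import Mathlib

/-- The finite quadratic module `(ℤ/Nℤ)² ⊕ (ℤ/N'ℤ)²`. -/
abbrev Dty (N N' : ℕ) := (ZMod N × ZMod N) × (ZMod N' × ZMod N')

/-- The quadratic form `q(w,x,y,z) = wx/N + yz/N'` valued in `ℚ/ℤ`. -/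
noncomputable def qD (N N' : ℕ) (x : Dty N N') : AddCircle (1 : ℚ) :=
  ((x.1.1.val * x.1.2.val / (N : ℚ) + x.2.1.val * x.2.2.val / (N' : ℚ) : ℚ) : AddCircle (1 : ℚ))

/-- `M = gcd(N/N', c)`. -/
def Mgcd (N N' : ℕ) (c : ℤ) : ℤ := Nat.gcd (N / N') c.natAbs

/-- The subgroup `H¹_{a,c}` generated by `(Na/(N'M), 0, 0, -c/M)` and `(0, c, a, 0)`. -/
def H1 (N N' : ℕ) (a c : ℤ) : AddSubgroup (Dty N N') :=
  AddSubgroup.closure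
    { (((((N : ℤ) / ((N' : ℤ) * Mgcd N N' c) * a : ℤ) : ZMod N), (0 : ZMod N)),
        ((0 : ZMod N'), ((-(c / Mgcd N N' c) : ℤ) : ZMod N'))),
      (((0 : ZMod N), (c : ZMod N)), ((a : ZMod N'), (0 : ZMod N'))) }

/-- The subgroup `H²_{a,c}` generated by `(Na/(N'M), 0, c/M, 0)` and `(0, c, 0, -a)`. -/
def H2 (N N' : ℕ) (a c : ℤ) : AddSubgroup (Dty N N') :=
  AddSubgroup.closure
    { (((((N : ℤ) / ((N' : ℤ) * Mgcd N N' c) * a : ℤ) : ZMod N), (0 : ZMod N)),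
        (((c / Mgcd N N' c : ℤ) : ZMod N'), (0 : ZMod N'))),
      (((0 : ZMod N), (c : ZMod N)), ((0 : ZMod N'), ((-a : ℤ) : ZMod N'))) }

/- ### Auxiliary lemmas -/

theorem coe_eq_coe_aux (p q : ℚ) (k : ℤ) (h : p - q = k) :
    (p : AddCircle (1:ℚ)) = (q : AddCircle (1:ℚ)) := by
  have h0 : ((p - q : ℚ) : AddCircle (1:ℚ)) = 0 := by
    rw [AddCircle.coe_eq_zero_iff]
    exact ⟨k, by rw [h]; simp⟩
  have h2 : ((p - q : ℚ) : AddCircle (1:ℚ)) = (p : AddCircle (1:ℚ)) - q := rfl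
  rw [h2] at h0
  linear_combination (norm := abel) h0

theorem sub_sub_int_aux (p q r : ℚ)
    (h : (p : AddCircle (1:ℚ)) - q - r = 0) : ∃ k : ℤ, p - q - r = k := by
  have h2 : ((p - q - r : ℚ) : AddCircle (1:ℚ)) = 0 := by
    have : ((p - q - r : ℚ) : AddCircle (1:ℚ)) = (p : AddCircle (1:ℚ)) - q - r := rfl
    rw [this, h]
  obtain ⟨k, hk⟩ := (AddCircle.coe_eq_zero_iff _).mp h2
  exact ⟨k, by simpa using hk.symm⟩

theorem key_aux (P Q α β x y : ℤ) (hQP : Q ∣ P)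
    (hcop : IsCoprime α β)
    (hdvd : Q * Int.gcd (P / Q) α ∣ β * x - α * y) :
    ∃ n : ℤ, P ∣ n * α - x ∧ Q ∣ n * β - y := by
  obtain ⟨u, v, huv⟩ := hcop
  set P' : ℤ := P / Q with hP'
  have hP : P = Q * P' := (Int.mul_ediv_cancel' hQP).symm
  set g : ℤ := (Int.gcd P' α : ℤ) with hg
  obtain ⟨W, hW⟩ := hdvd
  have hbez : g = P' * Int.gcdA P' α + α * Int.gcdB P' α := Int.gcd_eq_gcd_ab P' α
  set s : ℤ := Int.gcdB P' α
  set r : ℤ := Int.gcdA P' α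
  refine ⟨u * x + v * y + (s * (v * W)) * Q, ?_, ?_⟩
  · have h1 : (u * x + v * y + (s * (v * W)) * Q) * α - x
        = Q * P' * (-(v * W * r)) := by
      have hx : x = (u * α + v * β) * x := by rw [huv]; ring
      calc (u * x + v * y + (s * (v * W)) * Q) * α - x
          = -v * (β * x - α * y) + (s * (v * W)) * Q * α := by
            nth_rewrite 2 [hx]; ring
        _ = Q * (v * W * (α * s - g)) := by rw [hW]; ring
        _ = Q * P' * (-(v * W * r)) := by
            have : α * s - g = -(P' * r) := by rw [hbez]; ring
            rw [this]; ring
    exact ⟨-(v * W * r), by rw [hP]; linarith [h1]⟩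
  · have h2 : (u * x + v * y + (s * (v * W)) * Q) * β - y
        = Q * (u * (g * W) + s * v * W * β) := by
      have hy : y = (u * α + v * β) * y := by rw [huv]; ring
      calc (u * x + v * y + (s * (v * W)) * Q) * β - y
          = u * (β * x - α * y) + (s * (v * W)) * Q * β := by
            nth_rewrite 2 [hy]; ring
        _ = Q * (u * (g * W) + s * v * W * β) := by rw [hW]; ring
    exact ⟨_, h2⟩

theorem qD_intCast (N N' : ℕ) (hN : 0 < N) (hN' : 0 < N') (w x y z : ℤ) :
    qD N N' (((w : ZMod N), (x : ZMod N)), ((y : ZMod N'), (z : ZMod N'))) =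
      ((w * x / (N : ℚ) + y * z / (N' : ℚ) : ℚ) : AddCircle (1 : ℚ)) := by
  haveI : NeZero N := ⟨hN.ne'⟩
  haveI : NeZero N' := ⟨hN'.ne'⟩
  unfold qD
  apply coe_eq_coe_aux _ _
    (-(w / N) * (x % N) - (x / N) * w - (y / N') * (z % N') - (z / N') * y)
  have hw : (((w : ZMod N).val : ℚ)) = ((w % N : ℤ) : ℚ) := by
    exact_mod_cast congrArg (Int.cast : ℤ → ℚ) (ZMod.val_intCast w)
  have hx : (((x : ZMod N).val : ℚ)) = ((x % N : ℤ) : ℚ) := by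
    exact_mod_cast congrArg (Int.cast : ℤ → ℚ) (ZMod.val_intCast x)
  have hy : (((y : ZMod N').val : ℚ)) = ((y % N' : ℤ) : ℚ) := by
    exact_mod_cast congrArg (Int.cast : ℤ → ℚ) (ZMod.val_intCast y)
  have hz : (((z : ZMod N').val : ℚ)) = ((z % N' : ℤ) : ℚ) := by
    exact_mod_cast congrArg (Int.cast : ℤ → ℚ) (ZMod.val_intCast z)
  simp only [hw, hx, hy, hz]
  have hNQ : (N : ℚ) ≠ 0 := Nat.cast_ne_zero.mpr hN.ne'
  have hN'Q : (N' : ℚ) ≠ 0 := Nat.cast_ne_zero.mpr hN'.ne'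
  push_cast [Int.emod_def]
  field_simp
  ring

/-- The two generators -/
def Kd (N N' : ℕ) (c : ℤ) : ℤ := (N : ℤ) / ((N' : ℤ) * Mgcd N N' c)

def g1d (N N' : ℕ) (a c : ℤ) : Dty N N' :=
  ((((Kd N N' c * a : ℤ) : ZMod N), (0 : ZMod N)),
    ((0 : ZMod N'), ((-(c / Mgcd N N' c) : ℤ) : ZMod N')))

def g2d (N N' : ℕ) (a c : ℤ) : Dty N N' :=
  (((0 : ZMod N), (c : ZMod N)), ((a : ZMod N'), (0 : ZMod N')))

theorem H1_eq (N N' : ℕ) (a c : ℤ) :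
    H1 N N' a c = AddSubgroup.closure {g1d N N' a c, g2d N N' a c} := rfl

theorem smul_formula (N N' : ℕ) (a c : ℤ) (m n : ℤ) :
    m • g1d N N' a c + n • g2d N N' a c =
      ((((m * (Kd N N' c * a) : ℤ) : ZMod N), ((n * c : ℤ) : ZMod N)),
        (((n * a : ℤ) : ZMod N'), ((m * (-(c / Mgcd N N' c)) : ℤ) : ZMod N'))) := by
  simp only [g1d, g2d, Prod.smul_mk, Prod.mk_add_mk, smul_zero, add_zero, zero_add,
    zsmul_eq_mul, Prod.mk.injEq]
  refine ⟨⟨?_, ?_⟩, ?_, ?_⟩ <;> push_cast <;> ring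

theorem mem_H1_iff (N N' : ℕ) (a c : ℤ) (x : Dty N N') :
    x ∈ H1 N N' a c ↔ ∃ m n : ℤ, x = m • g1d N N' a c + n • g2d N N' a c := by
  rw [H1_eq]
  constructor
  · intro hx
    refine AddSubgroup.closure_induction ?_ ?_ ?_ ?_ hx
    · intro g hg
      simp only [Set.mem_insert_iff, Set.mem_singleton_iff] at hg
      rcases hg with rfl | rfl
      · exact ⟨1, 0, by rw [one_zsmul, zero_zsmul, add_zero]⟩
      · exact ⟨0, 1, by rw [one_zsmul, zero_zsmul, zero_add]⟩
    · exact ⟨0, 0, by rw [zero_zsmul, zero_zsmul, add_zero]⟩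
    · rintro p q hp hq ⟨mp, np, rfl⟩ ⟨mq, nq, rfl⟩
      exact ⟨mp + mq, np + nq, by rw [add_zsmul, add_zsmul]; abel⟩
    · rintro p hp ⟨mp, np, rfl⟩
      exact ⟨-mp, -np, by rw [neg_zsmul, neg_zsmul]; abel⟩
  · rintro ⟨m, n, rfl⟩
    have h1 : g1d N N' a c ∈ AddSubgroup.closure {g1d N N' a c, g2d N N' a c} :=
      AddSubgroup.subset_closure (Set.mem_insert _ _)
    have h2 : g2d N N' a c ∈ AddSubgroup.closure {g1d N N' a c, g2d N N' a c} :=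
      AddSubgroup.subset_closure (Set.mem_insert_of_mem _ (Set.mem_singleton _))
    exact AddSubgroup.add_mem _ (AddSubgroup.zsmul_mem _ h1 m) (AddSubgroup.zsmul_mem _ h2 n)

theorem stmt2 (N N' : ℕ) (hN : 0 < N) (hN' : 0 < N') (hdvd : N' ∣ N)
    (a c : ℤ) (hcop : Int.gcd a c = 1) (hc : 0 ≤ c) :
    (∀ x ∈ H1 N N' a c, qD N N' x = 0) ∧
    (∀ x : Dty N N', x ∈ H1 N N' a c ↔
      ∀ h ∈ H1 N N' a c, qD N N' (x + h) - qD N N' x - qD N N' h = 0) := by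
  haveI : NeZero N := ⟨hN.ne'⟩
  haveI : NeZero N' := ⟨hN'.ne'⟩
  -- notation
  have hN0 : (N : ℤ) ≠ 0 := by exact_mod_cast hN.ne'
  have hN'0 : (N' : ℤ) ≠ 0 := by exact_mod_cast hN'.ne'
  set M : ℤ := Mgcd N N' c with hMdef
  set K : ℤ := Kd N N' c with hKdef
  set c' : ℤ := c / Mgcd N N' c with hc'def
  -- basic arithmetic facts
  have hn0pos : 0 < N / N' := Nat.div_pos (Nat.le_of_dvd hN hdvd) hN'
  have hM0 : M ≠ 0 := by
    rw [hMdef, Mgcd]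
    exact_mod_cast (Nat.gcd_pos_of_pos_left c.natAbs hn0pos).ne'
  have hcabs : (c.natAbs : ℤ) = c := Int.natAbs_of_nonneg hc
  have hMc : M ∣ c := by
    rw [hMdef, Mgcd, ← hcabs]
    exact_mod_cast Nat.gcd_dvd_right (N / N') c.natAbs
  have hcM : c = M * c' := (Int.mul_ediv_cancel' hMc).symm
  have hn0cast : ((N / N' : ℕ) : ℤ) = (N : ℤ) / (N' : ℤ) := Int.natCast_ediv N N'
  have hMn0 : M ∣ (N : ℤ) / (N' : ℤ) := by
    rw [← hn0cast, hMdef, Mgcd]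
    exact_mod_cast Nat.gcd_dvd_left (N / N') c.natAbs
  have hN'N : (N' : ℤ) ∣ (N : ℤ) := Int.natCast_dvd_natCast.mpr hdvd
  have hNsplit : (N : ℤ) = N' * ((N : ℤ) / (N' : ℤ)) := (Int.mul_ediv_cancel' hN'N).symm
  have hN'M_N : (N' : ℤ) * M ∣ (N : ℤ) := by
    calc (N' : ℤ) * M ∣ (N' : ℤ) * ((N : ℤ) / (N' : ℤ)) := mul_dvd_mul_left _ hMn0
      _ = N := hNsplit.symm
  have hNK : (N : ℤ) = N' * M * K := (Int.mul_ediv_cancel' hN'M_N).symm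
  have hK0 : K ≠ 0 := by
    intro h; apply hN0; rw [hNK, h, mul_zero]
  -- coprimality facts
  have hacI : IsCoprime a c := Int.isCoprime_iff_gcd_eq_one.mpr hcop
  have haM : IsCoprime a M := by
    have := hacI; rw [hcM] at this; exact this.of_mul_right_left
  have hac' : IsCoprime a c' := by
    have := hacI; rw [hcM] at this; exact this.of_mul_right_right
  have hKc' : IsCoprime K c' := by
    have hKnat : K = ((N / N' / (N / N').gcd c.natAbs : ℕ) : ℤ) := by
      rw [hKdef, Kd, hMdef.symm]
      rw [show (N : ℤ) = (N' : ℤ) * ((N / N' : ℕ) : ℤ) by rw [hn0cast, ← hNsplit]]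
      rw [hMdef, Mgcd]
      rw [Int.mul_ediv_mul_of_pos _ _ (by exact_mod_cast hN' : (0:ℤ) < N')]
      exact (Int.natCast_ediv _ _).symm
    have hc'nat : c' = ((c.natAbs / (N / N').gcd c.natAbs : ℕ) : ℤ) := by
      rw [hc'def, Mgcd, ← hcabs]
      exact (Int.natCast_ediv _ _).symm
    rw [hKnat, hc'nat]
    rw [Int.isCoprime_iff_gcd_eq_one, Int.gcd_natCast_natCast]
    exact Nat.coprime_div_gcd_div_gcd (Nat.gcd_pos_of_pos_left c.natAbs hn0pos)
  -- q vanishes on all elements of H1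
  have hNQ : (N : ℚ) = (N' : ℚ) * (M : ℚ) * (K : ℚ) := by exact_mod_cast hNK
  have hcQ : (c : ℚ) = (M : ℚ) * (c' : ℚ) := by exact_mod_cast hcM
  have hN'Q : (N' : ℚ) ≠ 0 := by exact_mod_cast hN'0
  have hMQ : (M : ℚ) ≠ 0 := by exact_mod_cast hM0
  have hKQ : (K : ℚ) ≠ 0 := by exact_mod_cast hK0
  have part1 : ∀ x ∈ H1 N N' a c, qD N N' x = 0 := by
    intro x hx
    obtain ⟨m, n, rfl⟩ := (mem_H1_iff N N' a c x).mp hx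
    rw [smul_formula, qD_intCast N N' hN hN']
    have hr : ((m * (Kd N N' c * a) : ℤ) * (n * c : ℤ) / (N : ℚ)
        + (n * a : ℤ) * (m * (-(c / Mgcd N N' c)) : ℤ) / (N' : ℚ) : ℚ) = 0 := by
      push_cast
      rw [← hKdef, ← hc'def, hNQ, hcQ]
      field_simp
      ring
    rw [hr]
    exact (AddCircle.coe_eq_zero_iff _).mpr ⟨0, by simp⟩
  refine ⟨part1, fun x => ⟨?_, ?_⟩⟩
  · -- forward: members pair to zero
    intro hx h hh
    rw [part1 x hx, part1 h hh, part1 _ (AddSubgroup.add_mem _ hx hh)]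
    simp
  · -- backward: perpendicular elements are members
    intro hB
    obtain ⟨⟨W, X⟩, Y, Z⟩ := x
    have hWdec : W = ((W.val : ℤ) : ZMod N) := by
      push_cast; exact (ZMod.natCast_rightInverse W).symm
    have hXdec : X = ((X.val : ℤ) : ZMod N) := by
      push_cast; exact (ZMod.natCast_rightInverse X).symm
    have hYdec : Y = ((Y.val : ℤ) : ZMod N') := by
      push_cast; exact (ZMod.natCast_rightInverse Y).symm
    have hZdec : Z = ((Z.val : ℤ) : ZMod N') := by
      push_cast; exact (ZMod.natCast_rightInverse Z).symm
    set w : ℤ := (W.val : ℤ)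
    set x2 : ℤ := (X.val : ℤ)
    set y : ℤ := (Y.val : ℤ)
    set z : ℤ := (Z.val : ℤ)
    -- condition from pairing with g1
    have hg1mem : g1d N N' a c ∈ H1 N N' a c :=
      (mem_H1_iff N N' a c _).mpr ⟨1, 0, by simp⟩
    have hg2mem : g2d N N' a c ∈ H1 N N' a c :=
      (mem_H1_iff N N' a c _).mpr ⟨0, 1, by simp⟩
    have hB1 := hB _ hg1mem
    have hB2 := hB _ hg2mem
    have hxg1 : (((W, X), (Y, Z)) : Dty N N') + g1d N N' a c =
        ((((w + K * a : ℤ) : ZMod N), ((x2 : ℤ) : ZMod N)),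
          (((y : ℤ) : ZMod N'), ((z + -c' : ℤ) : ZMod N'))) := by
      rw [hWdec, hXdec, hYdec, hZdec]
      simp only [g1d, Prod.mk_add_mk, Prod.mk.injEq, ← hKdef, ← hc'def]
      refine ⟨⟨?_, ?_⟩, ?_, ?_⟩ <;> push_cast <;> ring
    have hxg2 : (((W, X), (Y, Z)) : Dty N N') + g2d N N' a c =
        ((((w : ℤ) : ZMod N), ((x2 + c : ℤ) : ZMod N)),
          (((y + a : ℤ) : ZMod N'), ((z : ℤ) : ZMod N'))) := by
      rw [hWdec, hXdec, hYdec, hZdec]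
      simp only [g2d, Prod.mk_add_mk, Prod.mk.injEq]
      refine ⟨⟨?_, ?_⟩, ?_, ?_⟩ <;> push_cast <;> ring
    have hxdec : (((W, X), (Y, Z)) : Dty N N') =
        (((w : ZMod N), (x2 : ZMod N)), ((y : ZMod N'), (z : ZMod N'))) := by
      rw [hWdec, hXdec, hYdec, hZdec]
    have hg1dec : g1d N N' a c =
        ((((K * a : ℤ) : ZMod N), ((0 : ℤ) : ZMod N)),
          (((0 : ℤ) : ZMod N'), ((-c' : ℤ) : ZMod N'))) := by
      simp only [g1d, ← hKdef, ← hc'def, Int.cast_zero, Int.cast_neg]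
    have hg2dec : g2d N N' a c =
        ((((0 : ℤ) : ZMod N), (c : ZMod N)), ((a : ZMod N'), ((0 : ℤ) : ZMod N'))) := by
      simp only [g2d, Int.cast_zero]
    rw [hxg1, hxdec, hg1dec] at hB1
    rw [hxg2, hxdec, hg2dec] at hB2
    rw [qD_intCast N N' hN hN', qD_intCast N N' hN hN', qD_intCast N N' hN hN'] at hB1
    rw [qD_intCast N N' hN hN', qD_intCast N N' hN hN', qD_intCast N N' hN hN'] at hB2
    obtain ⟨k1, hk1⟩ := sub_sub_int_aux _ _ _ hB1
    obtain ⟨k2, hk2⟩ := sub_sub_int_aux _ _ _ hB2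
    -- derive the two integer divisibility conditions
    have hC1 : (N' : ℤ) * M ∣ a * x2 - c * y := by
      refine ⟨k1, ?_⟩
      have hq : (a * x2 - c * y : ℚ) = (N' : ℚ) * M * k1 := by
        rw [← hk1]
        push_cast
        rw [hNQ, hcQ]
        field_simp
        ring
      exact_mod_cast hq
    have hC2 : w * c + z * a * M * K = (N : ℤ) * k2 := by
      have hq : (w * c + z * a * M * K : ℚ) = (N : ℚ) * k2 := by
        rw [← hk2]
        push_cast
        rw [hNQ, hcQ]
        field_simp
        ring
      exact_mod_cast hq
    -- K divides w
    have hKw : K ∣ w := by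
      have h1 : M * (w * c') = M * (K * (N' * k2 - z * a)) := by
        rw [hNK] at hC2; linear_combination hC2 - w * hcM
      have h2 : w * c' = K * (N' * k2 - z * a) := mul_left_cancel₀ hM0 h1
      exact hKc'.dvd_of_dvd_mul_right ⟨_, h2⟩
    obtain ⟨w₁, hw1⟩ := hKw
    have hC2' : (N' : ℤ) ∣ w₁ * c' + z * a := by
      refine ⟨k2, ?_⟩
      have h1 : (M * K) * (w₁ * c' + z * a) = (M * K) * ((N' : ℤ) * k2) := by
        rw [hNK] at hC2
        linear_combination hC2 - c * hw1 - K * w₁ * hcM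
      exact mul_left_cancel₀ (mul_ne_zero hM0 hK0) h1
    -- apply the key lemma twice
    obtain ⟨n, hn1, hn2⟩ := key_aux (N : ℤ) (N' : ℤ) c a x2 y hN'N hacI.symm
      (by
        have hgcd : ((Int.gcd ((N : ℤ) / (N' : ℤ)) c : ℕ) : ℤ) = M := by
          rw [hMdef, Mgcd]
          simp only [Int.gcd]
          rw [← hn0cast, Int.natAbs_natCast]
        rw [hgcd]
        exact hC1)
    obtain ⟨m, hm1, hm2⟩ := key_aux ((N' : ℤ) * M) (N' : ℤ) a c' w₁ (-z)
      (dvd_mul_right _ _) hac'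
      (by
        rw [Int.mul_ediv_cancel_left _ hN'0]
        have hgcd : Int.gcd M a = 1 := Int.isCoprime_iff_gcd_eq_one.mp haM.symm
        rw [hgcd]
        rw [show c' * w₁ - a * (-z) = w₁ * c' + z * a from by ring]
        simpa using hC2')
    -- assemble membership
    refine (mem_H1_iff N N' a c _).mpr ⟨m, n, ?_⟩
    rw [smul_formula, ← hKdef, ← hc'def]
    have e1 : W = ((m * (K * a) : ℤ) : ZMod N) := by
      rw [hWdec, ZMod.intCast_eq_intCast_iff]
      refine Int.modEq_iff_dvd.mpr ?_
      obtain ⟨t, ht⟩ := hm1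
      exact ⟨t, by rw [hNK]; linear_combination K * ht - hw1⟩
    have e2 : X = ((n * c : ℤ) : ZMod N) := by
      rw [hXdec, ZMod.intCast_eq_intCast_iff]
      refine Int.modEq_iff_dvd.mpr ?_
      obtain ⟨t, ht⟩ := hn1
      exact ⟨t, by linear_combination ht⟩
    have e3 : Y = ((n * a : ℤ) : ZMod N') := by
      rw [hYdec, ZMod.intCast_eq_intCast_iff]
      refine Int.modEq_iff_dvd.mpr ?_
      obtain ⟨t, ht⟩ := hn2
      exact ⟨t, by linear_combination ht⟩
    have e4 : Z = ((m * -c' : ℤ) : ZMod N') := by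
      rw [hZdec, ZMod.intCast_eq_intCast_iff]
      refine Int.modEq_iff_dvd.mpr ?_
      obtain ⟨t, ht⟩ := hm2
      exact ⟨-t, by linear_combination -ht⟩
    simp only [Prod.mk.injEq]
    exact ⟨⟨e1, e2⟩, e3, e4⟩
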